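/- In the Wilson case (φ(x) = 2x, γ = 1), the function φ_M admits the product formula φ_M(x) = ∏_{1≤j<k≤M} ( η(x_j^{(M)}) - η(x_k^{(M)}) ) / φ(i·j/2), where η(x) = x², x_j^{(M)} = x + i((M+1)/2 - j), and φ_M(x) := (2x)^{⌊M/2⌋} ∏_{k=1}^{M-2} ( 2(x - ik/2) · 2(x + ik/2) )^{⌊(M-k)/2⌋}. -/

import Mathlib

/-- The auxiliary function `φ_M` in the Wilson case (`φ(x) = 2x`, `γ = 1`):
`φ_M(x) = (2x)^⌊M/2⌋ ∏_{k=1}^{M-2} (2(x - ik/2) · 2(x + ik/2))^⌊(M-k)/2⌋`,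
with `φ_0 = φ_1 = 1`. -/
noncomputable def phiM (M : ℕ) (x : ℂ) : ℂ :=
  (2 * x) ^ (M / 2) *
    ∏ k ∈ Finset.Icc 1 (M - 2),
      ((2 * (x - Complex.I * (k : ℂ) / 2)) * (2 * (x + Complex.I * (k : ℂ) / 2))) ^ ((M - k) / 2)

/-- Normal form of `φ_M` indexed by integers:
`W M x = ∏_{t=-(M-2)}^{M-2} (2x + It)^{⌊(M-|t|)/2⌋}`. -/
noncomputable def W (M : ℕ) (x : ℂ) : ℂ :=
  ∏ t ∈ Finset.Icc (2 - (M:ℤ)) ((M:ℤ) - 2), (2*x + Complex.I * (t:ℂ)) ^ ((M - t.natAbs) / 2)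

lemma phiM_eq_W (M : ℕ) (x : ℂ) : phiM M x = W M x := by
  unfold phiM W
  match M with
  | 0 => norm_num
  | 1 => norm_num
  | (m+2) =>
    have h1 : Finset.Icc (2 - ((m+2:ℕ):ℤ)) (((m+2:ℕ):ℤ) - 2)
        = Finset.Icc (-(m:ℤ)) (-1) ∪ Finset.Icc 0 (m:ℤ) := by
      ext t; simp only [Finset.mem_Icc, Finset.mem_union]; push_cast; omega
    have hd : Disjoint (Finset.Icc (-(m:ℤ)) (-1)) (Finset.Icc 0 (m:ℤ)) := by
      simp only [Finset.disjoint_left, Finset.mem_Icc]; intro a h1 h2; omega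
    rw [h1, Finset.prod_union hd]
    have h0 : Finset.Icc (0:ℤ) (m:ℤ) = insert 0 (Finset.Icc 1 (m:ℤ)) := by
      ext t; simp only [Finset.mem_Icc, Finset.mem_insert]; omega
    rw [h0, Finset.prod_insert (by simp)]
    have hneg : ∏ t ∈ Finset.Icc (-(m:ℤ)) (-1), (2*x + Complex.I * (t:ℂ)) ^ ((m+2 - t.natAbs) / 2)
        = ∏ t ∈ Finset.Icc (1:ℤ) (m:ℤ), (2*x - Complex.I * (t:ℂ)) ^ ((m+2 - t.natAbs) / 2) := by
      apply Finset.prod_nbij' (fun t => -t) (fun t => -t)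
      · intro a ha; simp only [Finset.mem_Icc] at *; omega
      · intro a ha; simp only [Finset.mem_Icc] at *; omega
      · intro a _; ring
      · intro a _; ring
      · intro a ha
        have : ((-a : ℤ) : ℂ) = -(a:ℂ) := by push_cast; ring
        rw [this, Int.natAbs_neg]; ring_nf
    have hnat : ∏ k ∈ Finset.Icc 1 (m+2-2),
          ((2 * (x - Complex.I * (k:ℂ) / 2)) * (2 * (x + Complex.I * (k:ℂ) / 2))) ^ ((m+2 - k) / 2)
        = ∏ t ∈ Finset.Icc (1:ℤ) (m:ℤ),
          ((2*x - Complex.I * (t:ℂ)) * (2*x + Complex.I * (t:ℂ))) ^ ((m+2 - t.natAbs) / 2) := by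
      refine Finset.prod_nbij' (fun k => (k:ℤ)) (fun t => t.toNat) ?_ ?_ ?_ ?_ ?_
      · intro a ha; simp only [Finset.mem_Icc] at *; omega
      · intro a ha; simp only [Finset.mem_Icc] at *; omega
      · intro a _; simp
      · intro a ha; simp only [Finset.mem_Icc] at ha; show ((a.toNat : ℕ) : ℤ) = a; omega
      · intro a ha; simp only [Finset.mem_Icc] at ha
        have h2 : ((a:ℤ).natAbs) = a := by omega
        rw [h2, Int.cast_natCast]
        congr 1
        ring
    have hsplit : ∏ t ∈ Finset.Icc (1:ℤ) (m:ℤ),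
          ((2*x - Complex.I * (t:ℂ)) * (2*x + Complex.I * (t:ℂ))) ^ ((m+2 - t.natAbs) / 2)
        = (∏ t ∈ Finset.Icc (1:ℤ) (m:ℤ), (2*x - Complex.I * (t:ℂ)) ^ ((m+2 - t.natAbs) / 2)) *
          ∏ t ∈ Finset.Icc (1:ℤ) (m:ℤ), (2*x + Complex.I * (t:ℂ)) ^ ((m+2 - t.natAbs) / 2) := by
      rw [← Finset.prod_mul_distrib]
      exact Finset.prod_congr rfl fun t _ => mul_pow _ _ _
    rw [hneg, hnat, hsplit]
    simp only [Int.natAbs_zero, Int.cast_zero, mul_zero, add_zero, Nat.sub_zero]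
    ring

lemma W_rec (M : ℕ) (x : ℂ) :
    W (M+1) x = W M (x + Complex.I/2) * ∏ j ∈ Finset.Icc 1 M, (2*x + Complex.I * (1 - (j:ℂ))) := by
  unfold W
  have hA : ∏ t ∈ Finset.Icc (2 - (M:ℤ)) ((M:ℤ) - 2),
        (2*(x + Complex.I/2) + Complex.I * (t:ℂ)) ^ ((M - t.natAbs) / 2)
      = ∏ s ∈ Finset.Icc (1 - (M:ℤ)) ((M:ℤ) - 1),
        (2*x + Complex.I * (s:ℂ)) ^ ((M - (s-1).natAbs) / 2) := by
    have h1 : ∏ t ∈ Finset.Icc (2 - (M:ℤ)) ((M:ℤ) - 2),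
          (2*(x + Complex.I/2) + Complex.I * (t:ℂ)) ^ ((M - t.natAbs) / 2)
        = ∏ s ∈ Finset.Icc (3 - (M:ℤ)) ((M:ℤ) - 1),
          (2*x + Complex.I * (s:ℂ)) ^ ((M - (s-1).natAbs) / 2) := by
      refine Finset.prod_nbij' (fun t => t + 1) (fun s => s - 1) ?_ ?_ ?_ ?_ ?_
      · intro a ha; simp only [Finset.mem_Icc] at *; omega
      · intro a ha; simp only [Finset.mem_Icc] at *; omega
      · intro a _; ring
      · intro a _; ring
      · intro a _
        have : ((a + 1 : ℤ) : ℂ) = (a:ℂ) + 1 := by push_cast; ring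
        rw [this]
        have h2 : (a + 1 - 1 : ℤ) = a := by ring
        rw [h2]
        congr 1
        ring
    rw [h1]
    refine Finset.prod_subset ?_ ?_
    · intro a; simp only [Finset.mem_Icc]; omega
    · intro a ha hna
      simp only [Finset.mem_Icc] at ha hna
      have : (M - (a-1).natAbs) / 2 = 0 := by omega
      rw [this, pow_zero]
  have hB : ∏ j ∈ Finset.Icc 1 M, (2*x + Complex.I * (1 - (j:ℂ)))
      = ∏ s ∈ Finset.Icc (1 - (M:ℤ)) ((M:ℤ) - 1),
        (2*x + Complex.I * (s:ℂ)) ^ (if s ≤ 0 then 1 else 0) := by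
    have h1 : ∏ j ∈ Finset.Icc 1 M, (2*x + Complex.I * (1 - (j:ℂ)))
        = ∏ s ∈ Finset.Icc (1 - (M:ℤ)) 0, (2*x + Complex.I * (s:ℂ)) ^ (if s ≤ 0 then 1 else 0) := by
      refine Finset.prod_nbij' (fun j => 1 - (j:ℤ)) (fun s => (1 - s).toNat) ?_ ?_ ?_ ?_ ?_
      · intro a ha; simp only [Finset.mem_Icc] at *; omega
      · intro a ha; simp only [Finset.mem_Icc] at *; omega
      · intro a ha; simp only [Finset.mem_Icc] at ha; beta_reduce; omega
      · intro a ha; simp only [Finset.mem_Icc] at ha; beta_reduce; omega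
      · intro a ha; simp only [Finset.mem_Icc] at ha; beta_reduce
        rw [if_pos (by omega), pow_one]
        congr 1
        push_cast
        ring
    rw [h1]
    refine Finset.prod_subset ?_ ?_
    · intro a; simp only [Finset.mem_Icc]; omega
    · intro a ha hna
      simp only [Finset.mem_Icc] at ha hna
      rw [if_neg (by omega), pow_zero]
  rw [hA, hB, ← Finset.prod_mul_distrib]
  have hset : Finset.Icc (2 - ((M+1:ℕ):ℤ)) (((M+1:ℕ):ℤ) - 2) = Finset.Icc (1 - (M:ℤ)) ((M:ℤ) - 1) := by
    congr 1 <;> push_cast <;> ring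
  rw [hset]
  refine Finset.prod_congr rfl ?_
  intro s hs
  simp only [Finset.mem_Icc] at hs
  rw [← pow_add]
  congr 1
  split_ifs <;> omega

lemma W_pair (M : ℕ) (x : ℂ) :
    W M x = ∏ j ∈ Finset.Icc 1 M, ∏ k ∈ Finset.Icc (j+1) M,
      (2*x + Complex.I * ((M:ℂ) + 1 - (j:ℂ) - (k:ℂ))) := by
  induction M generalizing x with
  | zero => simp [W]
  | succ M ih =>
    rw [W_rec, ih]
    rw [Finset.prod_Icc_succ_top (by omega : 1 ≤ M + 1)]
    have hempty : Finset.Icc (M+1+1) (M+1) = (∅ : Finset ℕ) := by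
      rw [Finset.Icc_eq_empty]; omega
    rw [hempty, Finset.prod_empty, mul_one]
    have hinner : ∀ j ∈ Finset.Icc 1 M,
        ∏ k ∈ Finset.Icc (j+1) (M+1), (2*x + Complex.I * (((M+1:ℕ):ℂ) + 1 - (j:ℂ) - (k:ℂ)))
        = (∏ k ∈ Finset.Icc (j+1) M,
            (2*(x+Complex.I/2) + Complex.I * ((M:ℂ) + 1 - (j:ℂ) - (k:ℂ))))
          * (2*x + Complex.I * (1 - (j:ℂ))) := by
      intro j hj
      simp only [Finset.mem_Icc] at hj
      rw [Finset.prod_Icc_succ_top (by omega)]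
      congr 1
      · apply Finset.prod_congr rfl; intro k _; push_cast; ring
      · push_cast; ring
    rw [Finset.prod_congr rfl hinner, Finset.prod_mul_distrib]

lemma nat_fact_prod (M : ℕ) :
    ∏ j ∈ Finset.Icc 1 M, Nat.factorial (M - j) = ∏ j ∈ Finset.Icc 1 M, j ^ (M - j) := by
  induction M with
  | zero => simp
  | succ M ih =>
    rw [Finset.prod_Icc_succ_top (by omega), Finset.prod_Icc_succ_top (by omega)]
    simp only [Nat.sub_self, Nat.factorial_zero, pow_zero, mul_one]
    have hL : ∏ j ∈ Finset.Icc 1 M, Nat.factorial (M+1-j)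
        = (∏ j ∈ Finset.Icc 1 M, (M+1-j)) * ∏ j ∈ Finset.Icc 1 M, Nat.factorial (M-j) := by
      rw [← Finset.prod_mul_distrib]
      apply Finset.prod_congr rfl; intro j hj; simp only [Finset.mem_Icc] at hj
      have h : M+1-j = (M-j)+1 := by omega
      rw [h, Nat.factorial_succ]
    have hR : ∏ j ∈ Finset.Icc 1 M, j ^ (M+1-j)
        = (∏ j ∈ Finset.Icc 1 M, j) * ∏ j ∈ Finset.Icc 1 M, j^(M-j) := by
      rw [← Finset.prod_mul_distrib]
      apply Finset.prod_congr rfl; intro j hj; simp only [Finset.mem_Icc] at hj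
      have h : M+1-j = (M-j)+1 := by omega
      rw [h, pow_succ]; ring
    have hrefl : ∏ j ∈ Finset.Icc 1 M, (M+1-j) = ∏ j ∈ Finset.Icc 1 M, j := by
      refine Finset.prod_nbij' (fun j => M+1-j) (fun j => M+1-j) ?_ ?_ ?_ ?_ ?_ <;>
        intro a ha <;> simp only [Finset.mem_Icc] at * <;> omega
    rw [hL, hR, hrefl, ih]

lemma termwise (M j k : ℕ) (x : ℂ) (hj : 1 ≤ j) :
    ((x + Complex.I * (((M : ℂ) + 1) / 2 - (j : ℂ))) ^ 2 -
        (x + Complex.I * (((M : ℂ) + 1) / 2 - (k : ℂ))) ^ 2) /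
      (2 * (Complex.I * (j : ℂ) / 2))
    = (((k:ℂ) - (j:ℂ))/(j:ℂ)) * (2*x + Complex.I * ((M:ℂ) + 1 - (j:ℂ) - (k:ℂ))) := by
  have hjne : (j:ℂ) ≠ 0 := Nat.cast_ne_zero.2 (by omega)
  field_simp
  ring_nf

lemma ratio_one (M : ℕ) :
    ∏ j ∈ Finset.Icc 1 M, ∏ k ∈ Finset.Icc (j+1) M, (((k:ℂ) - (j:ℂ))/(j:ℂ)) = 1 := by
  have hnum : ∀ j ∈ Finset.Icc 1 M,
      ∏ k ∈ Finset.Icc (j+1) M, ((k:ℂ) - (j:ℂ)) = ((Nat.factorial (M - j) : ℕ) : ℂ) := by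
    intro j hj
    simp only [Finset.mem_Icc] at hj
    have h1 : ∏ k ∈ Finset.Icc (j+1) M, ((k:ℂ) - (j:ℂ))
        = ∏ m ∈ Finset.Icc 1 (M-j), ((m:ℕ) : ℂ) := by
      refine Finset.prod_nbij' (fun k => k - j) (fun m => m + j) ?_ ?_ ?_ ?_ ?_
      · intro a ha; simp only [Finset.mem_Icc] at *; omega
      · intro a ha; simp only [Finset.mem_Icc] at *; omega
      · intro a ha; simp only [Finset.mem_Icc] at ha; beta_reduce; omega
      · intro a ha; simp only [Finset.mem_Icc] at ha; beta_reduce; omega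
      · intro a ha; simp only [Finset.mem_Icc] at ha; beta_reduce
        have : ((a - j : ℕ) : ℂ) = (a:ℂ) - (j:ℂ) := by
          push_cast [Nat.cast_sub (by omega : j ≤ a)]; ring
        rw [this]
    rw [h1, ← Nat.cast_prod]
    congr 1
    rw [← Finset.Ico_add_one_right_eq_Icc]
    exact Finset.prod_Ico_id_eq_factorial (M-j)
  have hsplit : ∏ j ∈ Finset.Icc 1 M, ∏ k ∈ Finset.Icc (j+1) M, (((k:ℂ) - (j:ℂ))/(j:ℂ))
      = (↑(∏ j ∈ Finset.Icc 1 M, Nat.factorial (M - j)) : ℂ)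
        / (↑(∏ j ∈ Finset.Icc 1 M, j ^ (M - j)) : ℂ) := by
    push_cast
    rw [← Finset.prod_div_distrib]
    apply Finset.prod_congr rfl
    intro j hj
    rw [Finset.prod_div_distrib, Finset.prod_const, Nat.card_Icc, hnum j hj]
    have hc : M + 1 - (j+1) = M - j := by omega
    rw [hc]
  rw [hsplit, nat_fact_prod, div_self]
  have hpos : 0 < ∏ j ∈ Finset.Icc 1 M, j ^ (M - j) :=
    Finset.prod_pos (fun j hj => pow_pos (by simp only [Finset.mem_Icc] at hj; omega) _)
  exact Nat.cast_ne_zero.2 hpos.ne'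

/-- Product formula for `φ_M` in the Wilson case (`η(x) = x²`, `φ(x) = 2x`, `γ = 1`,
`x_j^{(M)} = x + i((M+1)/2 - j)`):
`φ_M(x) = ∏_{1 ≤ j < k ≤ M} (η(x_j^{(M)}) - η(x_k^{(M)})) / φ(i j/2)`. -/
theorem phiM_prod_formula (M : ℕ) (x : ℂ) :
    phiM M x =
      ∏ j ∈ Finset.Icc 1 M, ∏ k ∈ Finset.Icc (j + 1) M,
        ((x + Complex.I * (((M : ℂ) + 1) / 2 - (j : ℂ))) ^ 2 -
            (x + Complex.I * (((M : ℂ) + 1) / 2 - (k : ℂ))) ^ 2) /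
          (2 * (Complex.I * (j : ℂ) / 2)) := by
  rw [phiM_eq_W, W_pair]
  have h2 : ∏ j ∈ Finset.Icc 1 M, ∏ k ∈ Finset.Icc (j + 1) M,
        ((x + Complex.I * (((M : ℂ) + 1) / 2 - (j : ℂ))) ^ 2 -
            (x + Complex.I * (((M : ℂ) + 1) / 2 - (k : ℂ))) ^ 2) /
          (2 * (Complex.I * (j : ℂ) / 2))
      = (∏ j ∈ Finset.Icc 1 M, ∏ k ∈ Finset.Icc (j+1) M, (((k:ℂ) - (j:ℂ))/(j:ℂ)))
        * ∏ j ∈ Finset.Icc 1 M, ∏ k ∈ Finset.Icc (j+1) M,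
            (2*x + Complex.I * ((M:ℂ) + 1 - (j:ℂ) - (k:ℂ))) := by
    rw [← Finset.prod_mul_distrib]
    apply Finset.prod_congr rfl
    intro j hj
    simp only [Finset.mem_Icc] at hj
    rw [← Finset.prod_mul_distrib]
    apply Finset.prod_congr rfl
    intro k _
    exact termwise M j k x hj.1
  rw [h2, ratio_one, one_mul]
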